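/- If a feasible linear SDP min tr(Q W) subject to tr(Aᵢ W) = bᵢ (i = 1,…,m), W ⪰ 0 attains its optimum, then it has an optimal solution W* with rank(W*)·(rank(W*)+1)/2 ≤ m; in particular there is an optimal solution of rank at most ⌊(√(8m+1) − 1)/2⌋ = O(√m). -/

import Mathlib

open Matrix
open Matrix

lemma psd_factor {n : ℕ} {W : Matrix (Fin n) (Fin n) ℝ} (hW : W.PosSemidef) :
    ∃ C : Matrix (Fin n) (Fin W.rank) ℝ, W = C * Cᵀ := by
  classical
  have hH := hW.isHermitian
  set U : Matrix (Fin n) (Fin n) ℝ := (hH.eigenvectorUnitary : Matrix (Fin n) (Fin n) ℝ) with hU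
  set μ : Fin n → ℝ := hH.eigenvalues with hμ
  have hcard : Fintype.card {j // μ j ≠ 0} = W.rank := (hH.rank_eq_card_non_zero_eigs).symm
  let e : Fin W.rank ≃ {j // μ j ≠ 0} := (Fintype.equivFinOfCardEq hcard).symm
  let B : Matrix (Fin n) (Fin n) ℝ := fun i j => U i j * Real.sqrt (μ j)
  refine ⟨Matrix.of fun i k => B i (e k), ?_⟩
  have hBB : W = B * Bᵀ := by
    conv_lhs => rw [hH.spectral_theorem, Unitary.conjStarAlgAut_apply]
    ext i k
    simp only [Matrix.mul_apply, Matrix.transpose_apply, Matrix.diagonal_apply, mul_ite, mul_zero,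
      Finset.sum_ite_eq, Finset.sum_ite_eq', Finset.mem_univ, if_true, B]
    refine Finset.sum_congr rfl fun j _ => ?_
    simp only [Matrix.star_apply, star_trivial, Function.comp_apply, RCLike.ofReal_real_eq_id,
      id_eq]
    change _ = U i j * Real.sqrt (μ j) * (U k j * Real.sqrt (μ j))
    have h : Real.sqrt (μ j) * Real.sqrt (μ j) = μ j :=
      Real.mul_self_sqrt (hW.eigenvalues_nonneg j)
    rw [show U i j * Real.sqrt (μ j) * (U k j * Real.sqrt (μ j))
        = U i j * U k j * (Real.sqrt (μ j) * Real.sqrt (μ j)) by ring, h, hU, hμ]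
    ring
  refine hBB.trans ?_
  ext i k
  simp only [Matrix.mul_apply, Matrix.transpose_apply, Matrix.of_apply]
  rw [Equiv.sum_comp e (fun j : {j // μ j ≠ 0} => B i (j : Fin n) * B k (j : Fin n)),
    ← Finset.sum_subtype (Finset.univ.filter (fun j => μ j ≠ 0)) (by simp)
      (fun j => B i j * B k j)]
  refine (Finset.sum_filter_of_ne ?_).symm
  intro j _ hne
  by_contra h0
  apply hne
  have : B i j = 0 := by
    simp only [B]
    rw [h0, Real.sqrt_zero, mul_zero]
  rw [this, zero_mul]
open Matrix

lemma card_sym_pairs (r : ℕ) :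
    Fintype.card {p : Fin r × Fin r // p.1 ≤ p.2} = r * (r + 1) / 2 := by
  rw [← Fintype.card_congr (Sym2.sortEquiv (α := Fin r)), Sym2.card, Fintype.card_fin,
    Nat.choose_two_right]
  simp [mul_comm]

lemma exists_ker {ι κ : Type*} [Fintype ι] [Fintype κ] (h : Fintype.card κ < Fintype.card ι)
    (L : (ι → ℝ) →ₗ[ℝ] (κ → ℝ)) : ∃ x : ι → ℝ, x ≠ 0 ∧ L x = 0 := by
  by_contra hc
  push_neg at hc
  have hinj : Function.Injective L := by
    rw [← LinearMap.ker_eq_bot, Submodule.eq_bot_iff]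
    intro x hx
    by_contra hx0
    exact hc x hx0 hx
  have := LinearMap.finrank_le_finrank_of_injective hinj
  rw [Module.finrank_pi, Module.finrank_pi] at this
  omega

lemma small_t_psd {r : ℕ} {S : Matrix (Fin r) (Fin r) ℝ} (hS : S.IsHermitian) {t : ℝ}
    (ht : |t| * (∑ i, ∑ j, |S i j|) ≤ 1) : (1 + t • S).PosSemidef := by
  have hST : Sᵀ = S := by
    rw [← Matrix.conjTranspose_eq_transpose_of_trivial]; exact hS.eq
  refine Matrix.PosSemidef.of_dotProduct_mulVec_nonneg ?_ ?_
  · simp [Matrix.IsHermitian, Matrix.conjTranspose_add, Matrix.conjTranspose_smul, hST]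
  · intro x
    have hsx : star x = x := by funext i; simp
    rw [hsx]
    have hexp : x ⬝ᵥ ((1 + t • S) *ᵥ x) = x ⬝ᵥ x + t * (x ⬝ᵥ (S *ᵥ x)) := by
      rw [Matrix.add_mulVec, Matrix.one_mulVec, dotProduct_add, Matrix.smul_mulVec,
        dotProduct_smul, smul_eq_mul]
    rw [hexp]
    set d := x ⬝ᵥ x with hd
    have hdnn : 0 ≤ d := by
      refine Finset.sum_nonneg fun i _ => mul_self_nonneg _
    have hq : |x ⬝ᵥ (S *ᵥ x)| ≤ (∑ i, ∑ j, |S i j|) * d := by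
      have h1 : x ⬝ᵥ (S *ᵥ x) = ∑ i, ∑ j, x i * (S i j * x j) := by
        simp [dotProduct, Matrix.mulVec, Finset.mul_sum]
      rw [h1, Finset.sum_mul]
      refine (Finset.abs_sum_le_sum_abs _ _).trans (Finset.sum_le_sum fun i _ => ?_)
      rw [Finset.sum_mul]
      refine (Finset.abs_sum_le_sum_abs _ _).trans (Finset.sum_le_sum fun j _ => ?_)
      have hpair : |x i| * |x j| ≤ d := by
        have hii : x i * x i ≤ d := Finset.single_le_sum
          (f := fun k => x k * x k) (fun k _ => mul_self_nonneg _) (Finset.mem_univ i)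
        have hjj : x j * x j ≤ d := Finset.single_le_sum
          (f := fun k => x k * x k) (fun k _ => mul_self_nonneg _) (Finset.mem_univ j)
        have h2 : |x i| * |x i| = x i * x i := abs_mul_abs_self _
        have h3 : |x j| * |x j| = x j * x j := abs_mul_abs_self _
        nlinarith [sq_nonneg (|x i| - |x j|), abs_nonneg (x i), abs_nonneg (x j)]
      calc |x i * (S i j * x j)| = |S i j| * (|x i| * |x j|) := by
            rw [abs_mul, abs_mul]; ring
        _ ≤ |S i j| * d := mul_le_mul_of_nonneg_left hpair (abs_nonneg _)
    set K := ∑ i, ∑ j, |S i j| with hK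
    have hKnn : 0 ≤ K := Finset.sum_nonneg fun i _ => Finset.sum_nonneg fun j _ => abs_nonneg _
    have h4 : |t * (x ⬝ᵥ (S *ᵥ x))| ≤ d := by
      rw [abs_mul]
      calc |t| * |x ⬝ᵥ (S *ᵥ x)| ≤ |t| * (K * d) :=
            mul_le_mul_of_nonneg_left hq (abs_nonneg _)
        _ = (|t| * K) * d := by ring
        _ ≤ 1 * d := mul_le_mul_of_nonneg_right ht hdnn
        _ = d := one_mul d
    have := neg_abs_le (t * (x ⬝ᵥ (S *ᵥ x)))
    linarith

lemma exists_neg_quad {r : ℕ} {S : Matrix (Fin r) (Fin r) ℝ} (hS : S.IsHermitian) (hS0 : S ≠ 0) :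
    ∃ v : Fin r → ℝ, v ⬝ᵥ (S *ᵥ v) ≠ 0 := by
  by_contra hc
  push_neg at hc
  apply hS0
  have hsymm : ∀ i j, S j i = S i j := by
    intro i j
    have := congrFun (congrFun hS.eq i) j
    simpa [Matrix.conjTranspose_apply] using this
  ext i j
  have hdiag : ∀ k, S k k = 0 := by
    intro k
    have := hc (Pi.single k 1)
    simpa [Matrix.mulVec_single_one, single_dotProduct] using this
  have := hc (Pi.single i 1 + Pi.single j 1)
  rw [Matrix.mulVec_add, dotProduct_add, add_dotProduct, add_dotProduct] at this
  simp only [Matrix.mulVec_single_one, single_dotProduct, Matrix.col_apply, one_mul, mul_one] at this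
  by_cases hij : i = j
  · subst hij; simpa using hdiag i
  · rw [hdiag i, hdiag j, hsymm i j] at this
    simp only [Matrix.zero_apply]
    linarith
open Matrix

def symMat {r : ℕ} (x : {p : Fin r × Fin r // p.1 ≤ p.2} → ℝ) : Matrix (Fin r) (Fin r) ℝ :=
  fun i j => if h : i ≤ j then x ⟨(i, j), h⟩ else x ⟨(j, i), le_of_not_ge h⟩

lemma symMat_add {r : ℕ} (x y : {p : Fin r × Fin r // p.1 ≤ p.2} → ℝ) :
    symMat (x + y) = symMat x + symMat y := by
  ext i j
  by_cases h : i ≤ j <;> simp [symMat, h]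

lemma symMat_smul {r : ℕ} (c : ℝ) (x : {p : Fin r × Fin r // p.1 ≤ p.2} → ℝ) :
    symMat (c • x) = c • symMat x := by
  ext i j
  by_cases h : i ≤ j <;> simp [symMat, h]

lemma symMat_herm {r : ℕ} (x : {p : Fin r × Fin r // p.1 ≤ p.2} → ℝ) :
    (symMat x).IsHermitian := by
  rw [Matrix.IsHermitian, Matrix.conjTranspose_eq_transpose_of_trivial]
  ext i j
  simp only [Matrix.transpose_apply, symMat]
  by_cases h : i ≤ j <;> by_cases h' : j ≤ i
  · have : i = j := le_antisymm h h'
    subst this; simp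
  · simp [h, h']
  · simp [h, h']
  · exact absurd (le_of_not_ge h) h'

lemma symMat_ne_zero {r : ℕ} (x : {p : Fin r × Fin r // p.1 ≤ p.2} → ℝ) (hx : x ≠ 0) :
    symMat x ≠ 0 := by
  intro h0
  apply hx
  funext p
  have := congrFun (congrFun h0 p.1.1) p.1.2
  rw [symMat] at this
  simp only [Matrix.zero_apply] at this
  rw [dif_pos p.2] at this
  exact this
open Matrix

lemma psd_of_eig_nonneg {r : ℕ} {S : Matrix (Fin r) (Fin r) ℝ} (hS : S.IsHermitian)
    (h : ∀ j, 0 ≤ hS.eigenvalues j) : S.PosSemidef := by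
  have hsp := hS.spectral_theorem
  rw [hsp]
  have hd : (diagonal (RCLike.ofReal ∘ hS.eigenvalues) :
      Matrix (Fin r) (Fin r) ℝ).PosSemidef := by
    rw [Matrix.posSemidef_diagonal_iff]
    intro i
    simpa using h i
  have := hd.mul_mul_conjTranspose_same (hS.eigenvectorUnitary : Matrix (Fin r) (Fin r) ℝ)
  rwa [Unitary.conjStarAlgAut_apply, Matrix.star_eq_conjTranspose]

lemma boundary_lemma {r : ℕ} {S : Matrix (Fin r) (Fin r) ℝ} (hS : S.IsHermitian)
    (hv : ∃ v : Fin r → ℝ, v ⬝ᵥ (S *ᵥ v) < 0) :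
    ∃ t : ℝ, (1 + t • S).PosSemidef ∧ (1 + t • S).rank < r := by
  obtain ⟨v, hvneg⟩ := hv
  have hneg : ∃ j, hS.eigenvalues j < 0 := by
    by_contra hc
    push_neg at hc
    have hpsd := psd_of_eig_nonneg hS hc
    have := hpsd.dotProduct_mulVec_nonneg v
    rw [show star v = v from funext fun i => by simp] at this
    linarith
  obtain ⟨j0, hj0⟩ := hneg
  have hne : (Finset.univ : Finset (Fin r)).Nonempty := ⟨j0, Finset.mem_univ j0⟩
  set μ : Fin r → ℝ := hS.eigenvalues with hμdef
  set a : ℝ := Finset.univ.inf' hne μ with ha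
  have haneg : a < 0 := lt_of_le_of_lt (Finset.inf'_le _ (Finset.mem_univ j0)) hj0
  set t : ℝ := -a⁻¹ with htdef
  have hainv : a * a⁻¹ = 1 := mul_inv_cancel₀ (ne_of_lt haneg)
  set f : Fin r → ℝ := fun j => 1 + t * μ j with hf
  have hfnn : ∀ j, 0 ≤ f j := by
    intro j
    have hja : a ≤ μ j := Finset.inf'_le _ (Finset.mem_univ j)
    simp only [hf, htdef]
    nlinarith
  set U : Matrix (Fin r) (Fin r) ℝ := (hS.eigenvectorUnitary : Matrix (Fin r) (Fin r) ℝ)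
    with hU
  have hUU : U * star U = 1 := Matrix.mem_unitaryGroup_iff.mp (hS.eigenvectorUnitary).2
  have hsp : S = U * diagonal μ * star U := by
    have h0 : S = U * diagonal (RCLike.ofReal ∘ μ) * star U := by
        conv_lhs => rw [hS.spectral_theorem, Unitary.conjStarAlgAut_apply]
    rwa [show (RCLike.ofReal ∘ μ : Fin r → ℝ) = μ from funext fun i => by simp] at h0
  have hMeq : (1 : Matrix (Fin r) (Fin r) ℝ) + t • S = U * diagonal f * star U := by
    have hdf : (diagonal f : Matrix (Fin r) (Fin r) ℝ)
        = 1 + t • diagonal μ := by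
      rw [← Matrix.diagonal_one, ← Matrix.diagonal_smul, ← Matrix.diagonal_add]
      congr 1
    rw [hdf, Matrix.mul_add, Matrix.add_mul, Matrix.mul_one, hUU]
    congr 1
    rw [Matrix.mul_smul, Matrix.smul_mul, ← hsp]

  have hdiagPSD : (diagonal f : Matrix (Fin r) (Fin r) ℝ).PosSemidef :=
    Matrix.posSemidef_diagonal_iff.mpr hfnn
  refine ⟨t, ?_, ?_⟩
  · rw [hMeq]
    have := hdiagPSD.mul_mul_conjTranspose_same U
    rwa [Matrix.star_eq_conjTranspose]
  · rw [hMeq]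
    obtain ⟨jm, _, hjm⟩ := Finset.exists_mem_eq_inf' hne μ
    have hfjm : f jm = 0 := by
      simp only [hf, htdef]
      rw [← hjm, ← ha, neg_mul, inv_mul_cancel₀ (ne_of_lt haneg)]
      ring
    calc (U * diagonal f * star U).rank ≤ (U * diagonal f).rank :=
          Matrix.rank_mul_le_left _ _
      _ ≤ (diagonal f : Matrix (Fin r) (Fin r) ℝ).rank := Matrix.rank_mul_le_right _ _
      _ = Fintype.card {j // f j ≠ 0} := Matrix.rank_diagonal f
      _ < Fintype.card (Fin r) := Fintype.card_subtype_lt (x := jm) (by simp [hfjm])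
      _ = r := Fintype.card_fin r

lemma main_ind (n m : ℕ) (Q : Matrix (Fin n) (Fin n) ℝ) (A : Fin m → Matrix (Fin n) (Fin n) ℝ)
    (b : Fin m → ℝ) :
    ∀ k : ℕ, ∀ W : Matrix (Fin n) (Fin n) ℝ, W.rank ≤ k → W.PosSemidef →
      (∀ i, ((A i) * W).trace = b i) →
      (∀ W' : Matrix (Fin n) (Fin n) ℝ, W'.PosSemidef → (∀ i, ((A i) * W').trace = b i) →
        (Q * W).trace ≤ (Q * W').trace) →
      ∃ Wstar : Matrix (Fin n) (Fin n) ℝ, Wstar.PosSemidef ∧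
        (∀ i, ((A i) * Wstar).trace = b i) ∧
        (∀ W' : Matrix (Fin n) (Fin n) ℝ, W'.PosSemidef → (∀ i, ((A i) * W').trace = b i) →
          (Q * Wstar).trace ≤ (Q * W').trace) ∧
        Wstar.rank * (Wstar.rank + 1) / 2 ≤ m := by
  intro k
  induction k with
  | zero =>
    intro W hrk hW hfeas hopt
    have h0 : W.rank = 0 := Nat.le_zero.mp hrk
    exact ⟨W, hW, hfeas, hopt, by rw [h0]; omega⟩
  | succ k ih =>
    intro W hrk hW hfeas hopt
    by_cases hbound : W.rank * (W.rank + 1) / 2 ≤ m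
    · exact ⟨W, hW, hfeas, hopt, hbound⟩
    · push_neg at hbound
      obtain ⟨C, hC⟩ := psd_factor hW
      let L : ({p : Fin W.rank × Fin W.rank // p.1 ≤ p.2} → ℝ) →ₗ[ℝ] (Fin m → ℝ) :=
        { toFun := fun x i => ((A i) * (C * symMat x * Cᵀ)).trace
          map_add' := by
            intro x y
            funext i
            simp only [symMat_add, Matrix.mul_add, Matrix.add_mul, Matrix.trace_add,
              Pi.add_apply]
          map_smul' := by
            intro c x
            funext i
            simp only [symMat_smul, Matrix.mul_smul, Matrix.smul_mul, Matrix.trace_smul,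
              Pi.smul_apply, smul_eq_mul, RingHom.id_apply] }
      have hcard : Fintype.card (Fin m) < Fintype.card {p : Fin W.rank × Fin W.rank // p.1 ≤ p.2} := by
        rw [Fintype.card_fin, card_sym_pairs]
        exact hbound
      obtain ⟨x, hx0, hLx⟩ := exists_ker hcard L
      set S := symMat x with hSdef
      have hSH : S.IsHermitian := symMat_herm x
      have hS0 : S ≠ 0 := symMat_ne_zero x hx0
      have htr0 : ∀ i, ((A i) * (C * S * Cᵀ)).trace = 0 := fun i => congrFun hLx i
      set Δ := C * S * Cᵀ with hΔdef
      have hdecomp : ∀ t : ℝ, C * (1 + t • S) * Cᵀ = W + t • Δ := by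
        intro t
        rw [Matrix.mul_add, Matrix.add_mul, Matrix.mul_one, ← hC]
        congr 1
        rw [Matrix.mul_smul, Matrix.smul_mul, hΔdef]
      have hCH : Cᴴ = Cᵀ := Matrix.conjTranspose_eq_transpose_of_trivial C
      have hPSDt : ∀ t : ℝ, (1 + t • S).PosSemidef → (W + t • Δ).PosSemidef := by
        intro t ht
        rw [← hdecomp t]
        have := ht.mul_mul_conjTranspose_same C
        rwa [hCH] at this
      have hfeast : ∀ t : ℝ, ∀ i, ((A i) * (W + t • Δ)).trace = b i := by
        intro t i
        rw [Matrix.mul_add, Matrix.trace_add, Matrix.mul_smul, Matrix.trace_smul, hfeas i,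
          htr0 i, smul_zero, add_zero]
      have hobj : ∀ t : ℝ, (Q * (W + t • Δ)).trace = (Q * W).trace + t * (Q * Δ).trace := by
        intro t
        rw [Matrix.mul_add, Matrix.trace_add, Matrix.mul_smul, Matrix.trace_smul, smul_eq_mul]
      have hc0 : (Q * Δ).trace = 0 := by
        by_contra hc
        set c := (Q * Δ).trace with hcdef
        have hcpos : 0 < |c| := abs_pos.mpr hc
        set K := ∑ i, ∑ j, |S i j| with hK
        have hKnn : 0 ≤ K :=
          Finset.sum_nonneg fun i _ => Finset.sum_nonneg fun j _ => abs_nonneg _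
        set t0 : ℝ := -c / (|c| * (K + 1)) with ht0
        have habst0 : |t0| = 1 / (K + 1) := by
          rw [ht0, abs_div, abs_neg, abs_mul, abs_abs,
            abs_of_nonneg (by linarith : (0:ℝ) ≤ K + 1)]
          rw [div_mul_eq_div_div]
          rw [div_self (ne_of_gt hcpos)]
        have habs : |t0| * K ≤ 1 := by
          rw [habst0, div_mul_eq_mul_div, one_mul, div_le_one (by linarith)]
          linarith
        have hpsd := small_t_psd hSH habs
        have hW' := hPSDt t0 hpsd
        have hle := hopt _ hW' (hfeast t0)
        rw [hobj t0] at hle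
        have hneg : t0 * c < 0 := by
          rw [ht0]
          have h1 : -c / (|c| * (K + 1)) * c = -(c * c) / (|c| * (K + 1)) := by ring
          rw [h1]
          apply div_neg_of_neg_of_pos
          · have : 0 < c * c := mul_self_pos.mpr hc
            linarith
          · positivity
        linarith
      obtain ⟨v, hv⟩ := exists_neg_quad hSH hS0
      have hkey : ∃ t : ℝ, (1 + t • S).PosSemidef ∧ (1 + t • S).rank < W.rank := by
        rcases lt_or_gt_of_ne hv with hlt | hgt
        · exact boundary_lemma hSH ⟨v, hlt⟩
        · have hSH' : (-S).IsHermitian := hSH.neg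
          have hv' : v ⬝ᵥ ((-S) *ᵥ v) < 0 := by
            rw [Matrix.neg_mulVec, dotProduct_neg]
            linarith
          obtain ⟨t, hpsd, hrank⟩ := boundary_lemma hSH' ⟨v, hv'⟩
          have heq : (1 : Matrix (Fin W.rank) (Fin W.rank) ℝ) + (-t) • S = 1 + t • (-S) := by
            rw [smul_neg, neg_smul]
          exact ⟨-t, by rw [heq]; exact hpsd, by rw [heq]; exact hrank⟩
      obtain ⟨t, hpsd1, hrank1⟩ := hkey
      have hW'psd := hPSDt t hpsd1
      have hW'rank : (W + t • Δ).rank < W.rank := by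
        calc (W + t • Δ).rank = (C * (1 + t • S) * Cᵀ).rank := by rw [hdecomp]
          _ ≤ (C * (1 + t • S)).rank := Matrix.rank_mul_le_left _ _
          _ ≤ (1 + t • S).rank := Matrix.rank_mul_le_right _ _
          _ < W.rank := hrank1
      have hW'obj : (Q * (W + t • Δ)).trace = (Q * W).trace := by
        rw [hobj, hc0, mul_zero, add_zero]
      have hW'opt : ∀ W' : Matrix (Fin n) (Fin n) ℝ, W'.PosSemidef →
          (∀ i, ((A i) * W').trace = b i) →
          (Q * (W + t • Δ)).trace ≤ (Q * W').trace := by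
        intro W' h1 h2
        rw [hW'obj]
        exact hopt W' h1 h2
      exact ih (W + t • Δ) (by omega) hW'psd (hfeast t) hW'opt

theorem stmt_16 (n m : ℕ) (Q : Matrix (Fin n) (Fin n) ℝ) (A : Fin m → Matrix (Fin n) (Fin n) ℝ)
    (b : Fin m → ℝ)
    (hattain : ∃ W0 : Matrix (Fin n) (Fin n) ℝ, W0.PosSemidef ∧ (∀ i, ((A i) * W0).trace = b i) ∧
      ∀ W : Matrix (Fin n) (Fin n) ℝ, W.PosSemidef → (∀ i, ((A i) * W).trace = b i) →
        (Q * W0).trace ≤ (Q * W).trace) :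
    ∃ Wstar : Matrix (Fin n) (Fin n) ℝ, Wstar.PosSemidef ∧
      (∀ i, ((A i) * Wstar).trace = b i) ∧
      (∀ W : Matrix (Fin n) (Fin n) ℝ, W.PosSemidef → (∀ i, ((A i) * W).trace = b i) →
        (Q * Wstar).trace ≤ (Q * W).trace) ∧
      Wstar.rank * (Wstar.rank + 1) / 2 ≤ m ∧
      Wstar.rank ≤ ⌊(Real.sqrt (8 * m + 1) - 1) / 2⌋₊ := by
  obtain ⟨W0, h1, h2, h3⟩ := hattain
  obtain ⟨Wstar, hpsd, hfeas, hopt, hb⟩ := main_ind n m Q A b W0.rank W0 le_rfl h1 h2 h3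
  refine ⟨Wstar, hpsd, hfeas, hopt, hb, ?_⟩
  set r := Wstar.rank with hr
  have h2m : r * (r + 1) ≤ 2 * m := by
    obtain ⟨q, hq⟩ := Nat.even_mul_succ_self r
    omega
  apply Nat.le_floor
  rw [le_div_iff₀ (by norm_num : (0:ℝ) < 2)]
  have hsq : ((2 * r + 1 : ℕ) : ℝ) ≤ Real.sqrt (8 * m + 1) := by
    rw [Real.le_sqrt (by positivity) (by positivity)]
    push_cast
    have : (r : ℝ) * (r + 1) ≤ 2 * m := by exact_mod_cast h2m
    nlinarith
  push_cast at hsq ⊢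
  linarith
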